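/- Let 𝒢 be a finite connected graph with more than one vertex and no cut vertices, and let 𝒞 be the set of cycles of 𝒢. Define C₁ ∼ C₂ if the cycles share an edge, and let ≈ be the equivalence relation generated by ∼. Then the union of the cycles in any single ≈-class is all of 𝒢, i.e. 𝒞 forms a single ≈-class whose union of edges is the edge set of 𝒢. -/

import Mathlib

/-- The type of cycles of a simple graph: closed walks that are cycles. -/
def GraphCycle {V : Type*} (G : SimpleGraph V) : Type _ :=
  Σ v : V, {w : G.Walk v v // w.IsCycle}

/-- Two cycles are elementarily related if they share an edge. -/
def cyclesShareEdge {V : Type*} {G : SimpleGraph V}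
    (c₁ c₂ : GraphCycle G) : Prop :=
  ∃ e : Sym2 V, e ∈ c₁.2.1.edges ∧ e ∈ c₂.2.1.edges

namespace CyclesAux

open SimpleGraph

variable {V : Type*} {G : SimpleGraph V}

lemma concat_isPath {u v w : V} {p : G.Walk u v} (hp : p.IsPath) (h : G.Adj v w)
    (hw : w ∉ p.support) : (p.concat h).IsPath := by
  rw [SimpleGraph.Walk.isPath_def, SimpleGraph.Walk.support_concat]
  rw [List.nodup_append']
  exact ⟨hp.support_nodup, List.nodup_singleton _, by simpa using hw⟩

/-- Key construction: if `uv` and `vw` are edges with `u ≠ w` and removing `v`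
keeps the graph connected, there is a cycle through both edges. -/
lemma exists_cycle_thru {u v w : V} (huv : G.Adj u v) (hvw : G.Adj v w) (huw : u ≠ w)
    (hc : (G.induce ({v}ᶜ : Set V)).Connected) :
    ∃ (c : G.Walk v v), c.IsCycle ∧ s(u, v) ∈ c.edges ∧ s(v, w) ∈ c.edges := by
  have hu : u ∈ ({v}ᶜ : Set V) := by simpa using (huv.ne)
  have hw : w ∈ ({v}ᶜ : Set V) := by simpa using hvw.ne'
  classical
  obtain ⟨p0⟩ := hc ⟨w, hw⟩ ⟨u, hu⟩
  set f := (SimpleGraph.Embedding.induce (G := G) ({v}ᶜ : Set V)).toHom with hf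
  have hfinj : Function.Injective f := Subtype.val_injective
  set p : G.Walk w u := p0.toPath.val.map f with hpdef
  have hp : p.IsPath := SimpleGraph.Walk.map_isPath_of_injective hfinj p0.toPath.2
  have hvp : v ∉ p.support := by
    show v ∉ (p0.toPath.val.map f).support
    rw [SimpleGraph.Walk.support_map]
    rintro hm
    obtain ⟨⟨x, hx⟩, -, hfx⟩ := List.mem_map.mp hm
    exact hx hfx
  have hq : (p.concat huv).IsPath := concat_isPath hp huv hvp
  have hne : s(v, w) ≠ s(u, v) := by
    rw [Ne, Sym2.eq_iff]
    rintro (⟨h1, h2⟩ | ⟨h1, h2⟩)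
    · exact huv.ne h1.symm
    · exact huw h2.symm
  have hnotin : s(v, w) ∉ (p.concat huv).edges := by
    rw [SimpleGraph.Walk.edges_concat]
    intro hm
    rw [List.concat_eq_append, List.mem_append] at hm
    rcases hm with hm | hm
    · exact hvp (SimpleGraph.Walk.fst_mem_support_of_mem_edges p hm)
    · simp only [List.mem_singleton] at hm
      exact hne hm
  refine ⟨SimpleGraph.Walk.cons hvw (p.concat huv), ?_, ?_, ?_⟩
  · exact (SimpleGraph.Walk.cons_isCycle_iff _ _).mpr ⟨hq, hnotin⟩
  · rw [SimpleGraph.Walk.edges_cons, SimpleGraph.Walk.edges_concat]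
    simp
  · rw [SimpleGraph.Walk.edges_cons]
    exact List.mem_cons_self

lemma connected_closure (hconn : G.Connected) {T : Set V} (ht : T.Nonempty)
    (hclosed : ∀ ⦃a b : V⦄, G.Adj a b → a ∈ T → b ∈ T) : ∀ x, x ∈ T := by
  obtain ⟨t, htT⟩ := ht
  intro x
  obtain ⟨wk⟩ := hconn t x
  clear hconn
  induction wk with
  | nil => exact htT
  | cons h p ih => exact ih (hclosed h htT)

end CyclesAux

/-- In a finite connected graph with more than one vertex and no cut vertices,
the set of cycles forms a single equivalence class under the equivalence
relation generated by edge-sharing, and the union of the edges of the cycles in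
any single class is the whole edge set of the graph. -/
theorem cycles_single_class_of_no_cutvertex
    (V : Type*) [Fintype V] (G : SimpleGraph V) (hconn : G.Connected)
    (hcard : 1 < Fintype.card V)
    (hcut : ∀ v : V, (G.induce ({v}ᶜ : Set V)).Connected) :
    (∀ c₀ c₁ : GraphCycle G, Relation.EqvGen cyclesShareEdge c₀ c₁) ∧
    (∀ c₀ : GraphCycle G, ∀ e ∈ G.edgeSet,
      ∃ c : GraphCycle G,
        Relation.EqvGen cyclesShareEdge c₀ c ∧ e ∈ c.2.1.edges) := by
  -- S c₀ e : edge e lies on a cycle equivalent to c₀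
  set S : GraphCycle G → Sym2 V → Prop := fun c₀ e =>
    ∃ c : GraphCycle G, Relation.EqvGen cyclesShareEdge c₀ c ∧ e ∈ c.2.1.edges with hS
  -- Key step: propagate S along adjacency
  have step : ∀ (c₀ : GraphCycle G) (a b : V), (∃ u, S c₀ s(u, a)) → G.Adj a b →
      S c₀ s(a, b) := by
    rintro c₀ a b ⟨u, c, hcc, hce⟩ hab
    by_cases hub : u = b
    · subst hub
      exact ⟨c, hcc, by rwa [Sym2.eq_swap]⟩
    · have hua : G.Adj u a := c.2.1.adj_of_mem_edges hce
      obtain ⟨w, hw, h1, h2⟩ := CyclesAux.exists_cycle_thru hua hab hub (hcut a)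
      refine ⟨⟨a, w, hw⟩, ?_, h2⟩
      exact Relation.EqvGen.trans _ _ _ hcc (Relation.EqvGen.rel _ _ ⟨s(u, a), hce, h1⟩)
  -- every cycle has an edge
  have hasEdge : ∀ c₀ : GraphCycle G, ∃ x y, s(x, y) ∈ c₀.2.1.edges := by
    intro c₀
    have hne : c₀.2.1.edges ≠ [] := by
      have h3 := c₀.2.2.three_le_length
      have hl : c₀.2.1.edges.length = c₀.2.1.length := SimpleGraph.Walk.length_edges _
      intro h
      rw [h] at hl
      simp at hl
      omega
    obtain ⟨e, he⟩ := List.exists_mem_of_ne_nil _ hne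
    induction e using Sym2.ind with
    | _ x y => exact ⟨x, y, he⟩
  -- part 2
  have part2 : ∀ c₀ : GraphCycle G, ∀ e ∈ G.edgeSet, S c₀ e := by
    intro c₀ e he
    set T : Set V := {v | ∃ u, S c₀ s(u, v)} with hT
    have hTne : T.Nonempty := by
      obtain ⟨x, y, hxy⟩ := hasEdge c₀
      exact ⟨y, x, c₀, Relation.EqvGen.refl _, hxy⟩
    have hTclosed : ∀ ⦃a b : V⦄, G.Adj a b → a ∈ T → b ∈ T := by
      intro a b hab ha
      exact ⟨a, step c₀ a b ha hab⟩
    have hTall := CyclesAux.connected_closure hconn hTne hTclosed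
    induction e using Sym2.ind with
    | _ a b =>
      rw [SimpleGraph.mem_edgeSet] at he
      exact step c₀ a b (hTall a) he
  refine ⟨?_, part2⟩
  intro c₀ c₁
  obtain ⟨x, y, hxy⟩ := hasEdge c₁
  have hxyE : s(x, y) ∈ G.edgeSet := c₁.2.1.edges_subset_edgeSet hxy
  obtain ⟨c, hcc, hce⟩ := part2 c₀ _ hxyE
  exact Relation.EqvGen.trans _ _ _ hcc (Relation.EqvGen.rel _ _ ⟨s(x, y), hce, hxy⟩)
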